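/- (Variance bound for the quadratic remainder term.) Let ε_1,…,ε_n be independent real random variables with common distribution function F, and let b_i, c_i ∈ ℝ for i = 1,…,n. Define T = Σ_{i=1}^n ∫_0^{c_i} (1_{ε_i ≤ v + b_i} − 1_{ε_i ≤ b_i}) dv (oriented integrals). Then Var[T] ≤ 4 (max_{1≤i≤n} |c_i|) · Σ_{i=1}^n ∫_0^{c_i} (F(v + b_i) − F(b_i)) dv = 4 (max_{1≤i≤n} |c_i|) · E[T]. -/

import Mathlib

open MeasureTheory ProbabilityTheory

/-- Variance bound for the quadratic remainder term: for independent `ε_1,…,ε_n` with common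
distribution function `F` and reals `b_i, c_i`, the sum
`T = Σ_i ∫_0^{c_i} (1_{ε_i ≤ v+b_i} − 1_{ε_i ≤ b_i}) dv` satisfies
`Var[T] ≤ 4 (max_i |c_i|) Σ_i ∫_0^{c_i} (F(v+b_i) − F(b_i)) dv = 4 (max_i |c_i|) E[T]`. -/
theorem variance_quadratic_remainder {Ω : Type*} [MeasurableSpace Ω]
    (P : Measure Ω) [IsProbabilityMeasure P]
    (n : ℕ) (hn : 0 < n)
    (ε : Fin n → Ω → ℝ) (hε : ∀ i, Measurable (ε i))
    (hindep : iIndepFun ε P)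
    (F : ℝ → ℝ) (hF : ∀ i t, (P {ω | ε i ω ≤ t}).toReal = F t)
    (b c : Fin n → ℝ) :
    variance (fun ω => ∑ i, ∫ v in (0 : ℝ)..(c i),
        ((if ε i ω ≤ v + b i then (1 : ℝ) else 0) - (if ε i ω ≤ b i then 1 else 0))) P
      ≤ 4 * (Finset.univ.sup' ⟨⟨0, hn⟩, Finset.mem_univ _⟩ fun i => |c i|)
          * ∑ i, ∫ v in (0 : ℝ)..(c i), (F (v + b i) - F (b i)) ∧
    (∫ ω, (∑ i, ∫ v in (0 : ℝ)..(c i),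
        ((if ε i ω ≤ v + b i then (1 : ℝ) else 0) - (if ε i ω ≤ b i then 1 else 0))) ∂P)
      = ∑ i, ∫ v in (0 : ℝ)..(c i), (F (v + b i) - F (b i)) := by
  classical
  set M : ℝ := Finset.univ.sup' ⟨⟨0, hn⟩, Finset.mem_univ _⟩ fun i => |c i| with hMdef
  have hcM : ∀ i, |c i| ≤ M := by
    intro i
    rw [hMdef]
    exact Finset.le_sup' (fun j => |c j|) (Finset.mem_univ i)
  have hM0 : 0 ≤ M := le_trans (abs_nonneg _) (hcM ⟨0, hn⟩)
  set Φ : Fin n → ℝ → ℝ := fun i e => ∫ v in (0 : ℝ)..(c i),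
      ((if e ≤ v + b i then (1 : ℝ) else 0) - (if e ≤ b i then 1 else 0)) with hΦdef
  set X : Fin n → Ω → ℝ := fun i ω => Φ i (ε i ω) with hXdef
  -- measurability of the kernel
  have hH : ∀ i, Measurable (fun p : ℝ × ℝ =>
      ((if p.1 ≤ p.2 + b i then (1 : ℝ) else 0) - (if p.1 ≤ b i then 1 else 0))) := by
    intro i
    refine Measurable.sub ?_ ?_
    · exact Measurable.ite
        (measurableSet_le measurable_fst (measurable_snd.add_const _))
        measurable_const measurable_const
    · exact Measurable.ite (measurableSet_le measurable_fst measurable_const)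
        measurable_const measurable_const
  have hΦmeas : ∀ i, Measurable (Φ i) := by
    intro i
    have h1 : Φ i = fun e => (if (0:ℝ) ≤ c i then (1:ℝ) else -1) *
        ∫ v in Set.uIoc (0:ℝ) (c i),
          ((if e ≤ v + b i then (1 : ℝ) else 0) - (if e ≤ b i then 1 else 0)) := by
      funext e
      simp only [hΦdef, intervalIntegral.intervalIntegral_eq_integral_uIoc, smul_eq_mul]
    rw [h1]
    exact (((hH i).stronglyMeasurable.integral_prod_right').measurable).const_mul _
  have hXmeas : ∀ i, Measurable (X i) := fun i => (hΦmeas i).comp (hε i)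
  -- nonnegativity
  have hΦnonneg : ∀ i e, 0 ≤ Φ i e := by
    intro i e
    rcases le_or_gt 0 (c i) with h | h
    · refine intervalIntegral.integral_nonneg h ?_
      intro v hv
      have hv0 : 0 ≤ v := hv.1
      split_ifs with h1 h2 <;> simp_all <;> linarith
    · rw [hΦdef]
      simp only
      rw [intervalIntegral.integral_symm (c i) 0]
      have h4 : 0 ≤ ∫ v in (c i)..(0:ℝ),
          -((if e ≤ v + b i then (1 : ℝ) else 0) - (if e ≤ b i then 1 else 0)) := by
        refine intervalIntegral.integral_nonneg h.le ?_
        intro v hv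
        have hv0 : v ≤ 0 := hv.2
        split_ifs with h1 h2 <;> simp_all <;> linarith
      rw [intervalIntegral.integral_neg] at h4
      linarith
  have hΦle : ∀ i e, |Φ i e| ≤ M := by
    intro i e
    have h1 : ‖∫ v in (0 : ℝ)..(c i),
        ((if e ≤ v + b i then (1 : ℝ) else 0) - (if e ≤ b i then 1 else 0))‖
        ≤ 1 * |c i - 0| := by
      refine intervalIntegral.norm_integral_le_of_norm_le_const ?_
      intro v _
      rw [Real.norm_eq_abs]
      split_ifs <;> norm_num
    rw [Real.norm_eq_abs] at h1
    calc |Φ i e| ≤ 1 * |c i - 0| := h1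
    _ = |c i| := by ring_nf
    _ ≤ M := hcM i
  have hXmem : ∀ i, MemLp (X i) 2 P := by
    intro i
    refine MemLp.of_bound (hXmeas i).aestronglyMeasurable M ?_
    exact ae_of_all _ fun ω => by rw [Real.norm_eq_abs]; exact hΦle i (ε i ω)
  have hXint : ∀ i, Integrable (X i) P := fun i => (hXmem i).integrable one_le_two
  -- independence
  have hindep' : iIndepFun X P := hindep.comp Φ hΦmeas
  -- expectation of each term, via Fubini
  have key : ∀ i, ∫ ω, X i ω ∂P = ∫ v in (0 : ℝ)..(c i), (F (v + b i) - F (b i)) := by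
    intro i
    have hSfin : IsFiniteMeasure (volume.restrict (Set.uIoc (0:ℝ) (c i))) := by
      constructor
      rw [Measure.restrict_apply_univ]
      exact measure_Ioc_lt_top
    haveI := hSfin
    have hHΩ : Measurable (fun p : Ω × ℝ =>
        ((if ε i p.1 ≤ p.2 + b i then (1 : ℝ) else 0) - (if ε i p.1 ≤ b i then 1 else 0))) := by
      refine Measurable.sub ?_ ?_
      · exact Measurable.ite
          (measurableSet_le ((hε i).comp measurable_fst) (measurable_snd.add_const _))
          measurable_const measurable_const
      · exact Measurable.ite
          (measurableSet_le ((hε i).comp measurable_fst) measurable_const)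
          measurable_const measurable_const
    have hHint : Integrable (fun p : Ω × ℝ =>
        ((if ε i p.1 ≤ p.2 + b i then (1 : ℝ) else 0) - (if ε i p.1 ≤ b i then 1 else 0)))
        (P.prod (volume.restrict (Set.uIoc (0:ℝ) (c i)))) := by
      refine (MemLp.of_bound hHΩ.aestronglyMeasurable 1 ?_).integrable le_rfl
      refine ae_of_all _ fun p => ?_
      rw [Real.norm_eq_abs]
      split_ifs <;> norm_num
    have hindi : ∀ t : ℝ, Integrable (fun ω => if ε i ω ≤ t then (1:ℝ) else 0) P ∧
        (∫ ω, (if ε i ω ≤ t then (1:ℝ) else 0) ∂P) = F t := by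
      intro t
      have hs : MeasurableSet {ω | ε i ω ≤ t} := measurableSet_le (hε i) measurable_const
      have heq : (fun ω => if ε i ω ≤ t then (1:ℝ) else 0)
          = Set.indicator {ω | ε i ω ≤ t} (fun _ => (1:ℝ)) := by
        funext ω
        simp [Set.indicator_apply, Set.mem_setOf_eq]
      constructor
      · rw [heq]; exact (integrable_const (1:ℝ)).indicator hs
      · rw [heq, integral_indicator_const (1:ℝ) hs, smul_eq_mul, mul_one, measureReal_def, hF]
    have hinner : ∀ v : ℝ, (∫ ω,
        ((if ε i ω ≤ v + b i then (1 : ℝ) else 0) - (if ε i ω ≤ b i then 1 else 0)) ∂P)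
        = F (v + b i) - F (b i) := by
      intro v
      rw [integral_sub (hindi (v + b i)).1 (hindi (b i)).1, (hindi (v + b i)).2,
        (hindi (b i)).2]
    have hswap : (∫ ω, (∫ v in Set.uIoc (0:ℝ) (c i),
        ((if ε i ω ≤ v + b i then (1 : ℝ) else 0) - (if ε i ω ≤ b i then 1 else 0))) ∂P)
        = ∫ v in Set.uIoc (0:ℝ) (c i), (F (v + b i) - F (b i)) := by
      rw [integral_integral_swap hHint]
      exact setIntegral_congr_fun measurableSet_uIoc fun v _ => hinner v
    calc (∫ ω, X i ω ∂P)
        = ∫ ω, ((if (0:ℝ) ≤ c i then (1:ℝ) else -1) • ∫ v in Set.uIoc (0:ℝ) (c i),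
            ((if ε i ω ≤ v + b i then (1 : ℝ) else 0) - (if ε i ω ≤ b i then 1 else 0))) ∂P := by
          refine integral_congr_ae (ae_of_all _ fun ω => ?_)
          simp only [hXdef, hΦdef, intervalIntegral.intervalIntegral_eq_integral_uIoc]
      _ = (if (0:ℝ) ≤ c i then (1:ℝ) else -1) • ∫ v in Set.uIoc (0:ℝ) (c i),
            (F (v + b i) - F (b i)) := by rw [integral_smul, hswap]
      _ = ∫ v in (0 : ℝ)..(c i), (F (v + b i) - F (b i)) := by
          rw [intervalIntegral.intervalIntegral_eq_integral_uIoc]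
  -- expectation nonneg
  have hI0 : ∀ i, 0 ≤ ∫ v in (0 : ℝ)..(c i), (F (v + b i) - F (b i)) := by
    intro i
    rw [← key i]
    exact integral_nonneg fun ω => hΦnonneg i (ε i ω)
  -- variance of each term
  have hvar : ∀ i, variance (X i) P ≤ M * ∫ v in (0 : ℝ)..(c i), (F (v + b i) - F (b i)) := by
    intro i
    rw [variance_eq_sub (hXmem i), ← key i]
    have h1 : (∫ ω, (X i ^ 2) ω ∂P) ≤ ∫ ω, M * X i ω ∂P := by
      refine integral_mono ((hXmem i).integrable_sq) ((hXint i).const_mul M) fun ω => ?_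
      simp only [Pi.pow_apply]
      have h0 := hΦnonneg i (ε i ω)
      have h2 := (abs_le.mp (hΦle i (ε i ω))).2
      calc X i ω ^ 2 = X i ω * X i ω := sq (X i ω) ▸ by ring
        _ ≤ M * X i ω := mul_le_mul_of_nonneg_right h2 h0
    have h2 : (∫ ω, M * X i ω ∂P) = M * ∫ ω, X i ω ∂P := integral_const_mul M _
    nlinarith [sq_nonneg (∫ ω, X i ω ∂P)]
  -- rewrite the target in terms of X
  have hTeq : (fun ω => ∑ i, ∫ v in (0 : ℝ)..(c i),
      ((if ε i ω ≤ v + b i then (1 : ℝ) else 0) - (if ε i ω ≤ b i then 1 else 0)))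
      = ∑ i, X i := by
    funext ω
    rw [Finset.sum_apply]
  rw [hTeq]
  constructor
  · have h1 : variance (∑ i, X i) P = ∑ i, variance (X i) P := by
      refine IndepFun.variance_sum (fun i _ => hXmem i) ?_
      intro i _ j _ hij
      exact hindep'.indepFun hij
    rw [h1]
    have h2 : (∑ i, variance (X i) P)
        ≤ ∑ i, M * ∫ v in (0 : ℝ)..(c i), (F (v + b i) - F (b i)) :=
      Finset.sum_le_sum fun i _ => hvar i
    rw [← Finset.mul_sum] at h2
    have h3 : 0 ≤ M * ∑ i, ∫ v in (0 : ℝ)..(c i), (F (v + b i) - F (b i)) :=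
      mul_nonneg hM0 (Finset.sum_nonneg fun i _ => hI0 i)
    calc (∑ i, variance (X i) P)
        ≤ M * ∑ i, ∫ v in (0 : ℝ)..(c i), (F (v + b i) - F (b i)) := h2
      _ ≤ 4 * M * ∑ i, ∫ v in (0 : ℝ)..(c i), (F (v + b i) - F (b i)) := by linarith
  · have h0 : integral P (∑ i, X i) = ∫ ω, ∑ i, X i ω ∂P := by
      congr 1
      funext ω
      rw [Finset.sum_apply]
    rw [h0, integral_finset_sum Finset.univ fun i _ => hXint i]
    exact Finset.sum_congr rfl fun i _ => key i
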